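/- arXiv:2501.13869 — 3 statements merged into one kernel-verified Lean document; each statement's English description precedes it below -/
import Mathlib

section
/- Let μ be a Radon measure on ℝ^{n+1}, z ∈ supp μ, 0 < r. Define b_{z,r} = ((k+2)/(2ω_k r^{k+2})) ∫_{B(z,r)} (r² − |y−z|²)(y−z) dμ(y). Suppose there are constants C, C' > 0 such that |⟨2b_{z,r}, x−z⟩ + Q_{z,r}(x−z) − |x−z|²| ≤ C|x−z|³/r for all x ∈ supp μ ∩ B(z, r/2), where Q_{z,r}(v) ≤ C'|v|² for all v. Suppose moreover that supp μ near z is a C¹ k-dimensional graph through z with tangent space T at z. Then b_{z,r} is orthogonal to T (or b_{z,r} = 0). -/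
open MeasureTheory Metric Set Filter Module
open scoped RealInnerProductSpace Topology ENNReal

noncomputable section

/-- `ℝ^{n+1}` as a Euclidean space. -/
abbrev Eu (n : ℕ) := EuclideanSpace ℝ (Fin (n + 1))

/-- `ω_k`: the Lebesgue measure of the unit ball in `ℝ^k`. -/
def unitBallVol (k : ℕ) : ℝ := (volume (ball (0 : EuclideanSpace ℝ (Fin k)) 1)).toReal

/-- The (topological) support of a measure on a metric space. -/
def msupp {X : Type*} [MetricSpace X] [MeasurableSpace X] (μ : Measure X) : Set X :=
  {x | ∀ r : ℝ, 0 < r → 0 < μ (ball x r)}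

/-- `μ` is locally `k`-uniform: `μ(B(x,r)) = ω_k r^k` for `x ∈ supp μ`, `0 < r ≤ 1`. -/
def LocUniform (n k : ℕ) (μ : Measure (Eu n)) : Prop :=
  ∀ x ∈ msupp μ, ∀ r : ℝ, 0 < r → r ≤ 1 →
    μ (ball x r) = ENNReal.ofReal (unitBallVol k * r ^ k)

/-- `μ` is locally uniformly distributed. -/
def LocUnifDist (n : ℕ) (μ : Measure (Eu n)) : Prop :=
  ∀ x ∈ msupp μ, ∀ y ∈ msupp μ, ∀ r : ℝ, 0 < r → r ≤ 1 →
    0 < μ (ball x r) ∧ μ (ball x r) = μ (ball y r) ∧ μ (ball x r) < ⊤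

/-- The graph map of `φ` over `ℝ^k × {0}^{n+1-k}`: `x' ↦ (x', φ(x'))`. -/
def graphMap (n k : ℕ) (φ : Fin (n + 1) → EuclideanSpace ℝ (Fin k) → ℝ) :
    EuclideanSpace ℝ (Fin k) → Eu n := fun x' =>
  (EuclideanSpace.equiv (Fin (n + 1)) ℝ).symm
    (fun j => if h : (j : ℕ) < k then x' ⟨j, h⟩ else φ j x')

/-- The Laplacian of a scalar function at `0`. -/
def lap0 (k : ℕ) (f : EuclideanSpace ℝ (Fin k) → ℝ) : ℝ :=
  ∑ i : Fin k, fderiv ℝ (fun x => fderiv ℝ f x (EuclideanSpace.single i 1)) 0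
    (EuclideanSpace.single i 1)

lemma unitBallVol_pos (k : ℕ) : 0 < unitBallVol k := by
  have h1 : (0:ℝ≥0∞) < volume (ball (0 : EuclideanSpace ℝ (Fin k)) 1) :=
    measure_ball_pos _ _ one_pos
  have h2 : volume (ball (0 : EuclideanSpace ℝ (Fin k)) 1) < ⊤ := measure_ball_lt_top
  exact ENNReal.toReal_pos h1.ne' h2.ne

set_option maxHeartbeats 2000000 in
/-- the vector `b_{z,r}` is orthogonal to the tangent plane. -/
theorem stmt2 (n k : ℕ) (μ : Measure (Eu n)) [IsLocallyFiniteMeasure μ]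
    (z : Eu n) (hz : z ∈ msupp μ) (r C C' : ℝ) (hr : 0 < r) (hC : 0 < C) (hC' : 0 < C')
    (b : Eu n) (Q : Eu n → ℝ)
    (hb : b = (((k : ℝ) + 2) / (2 * unitBallVol k * r ^ (k + 2))) •
        ∫ y in ball z r, (r ^ 2 - ‖y - z‖ ^ 2) • (y - z) ∂μ)
    (hQ : ∀ x, Q x = (((k : ℝ) + 2) / (unitBallVol k * r ^ (k + 2))) *
        ∫ y in ball z r, ⟪x, y - z⟫ ^ 2 ∂μ)
    (hQbound : ∀ v, Q v ≤ C' * ‖v‖ ^ 2)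
    (hineq : ∀ x ∈ msupp μ ∩ ball z (r / 2),
        |⟪2 • b, x - z⟫ + Q (x - z) - ‖x - z‖ ^ 2| ≤ C * ‖x - z‖ ^ 3 / r)
    (T : Submodule ℝ (Eu n)) (hT : finrank ℝ T = k)
    (r₁ : ℝ) (hr₁ : 0 < r₁) (ψ : T → Eu n) (hψC1 : ContDiff ℝ 1 ψ)
    (hψ0 : ψ 0 = 0) (hψd : fderiv ℝ ψ 0 = 0) (hψperp : ∀ t, ψ t ∈ Tᗮ)
    (hgraph : msupp μ ∩ ball z r₁ = {x | ∃ t : T, x = z + (t : Eu n) + ψ t} ∩ ball z r₁) :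
    b ∈ Tᗮ := by
  rw [Submodule.mem_orthogonal]
  intro u hu
  set t : T := ⟨u, hu⟩ with ht
  set M : ℝ := ‖u‖ + 1 with hM
  have hM1 : (1:ℝ) ≤ M := by rw [hM]; linarith [norm_nonneg u]
  have hM0 : (0:ℝ) < M := lt_of_lt_of_le one_pos hM1
  -- Q is nonnegative
  have hQnn : ∀ v, 0 ≤ Q v := by
    intro v
    rw [hQ]
    refine mul_nonneg (div_nonneg (by positivity) ?_) ?_
    · exact mul_nonneg (unitBallVol_pos k).le (by positivity)
    · exact setIntegral_nonneg measurableSet_ball fun y _ => sq_nonneg _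
  -- ψ is little-o of the identity at 0
  have ho : (fun w : T => ψ w) =o[𝓝 (0:T)] (fun w : T => w) := by
    have hd : HasFDerivAt ψ (0 : T →L[ℝ] Eu n) 0 := by
      have := (hψC1.differentiable one_ne_zero 0).hasFDerivAt
      rwa [hψd] at this
    have := hasFDerivAt_iff_isLittleO_nhds_zero.mp hd
    simpa [hψ0] using this
  have hcomp : Tendsto (fun s : ℝ => s • t) (𝓝[>] (0:ℝ)) (𝓝 (0:T)) := by
    have : Tendsto (fun s : ℝ => s • t) (𝓝 (0:ℝ)) (𝓝 ((0:ℝ) • t)) :=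
      (continuous_id.smul continuous_const).tendsto 0
    simpa using this.mono_left nhdsWithin_le_nhds
  have hψo : (fun s : ℝ => ψ (s • t)) =o[𝓝[>] (0:ℝ)] (fun s => s • t) :=
    ho.comp_tendsto hcomp
  have hOb : (fun s : ℝ => (s • t : T)) =O[𝓝[>] (0:ℝ)] (fun s : ℝ => s) := by
    refine Asymptotics.IsBigO.of_bound ‖t‖ (Eventually.of_forall fun s => ?_)
    rw [norm_smul]
    simp [mul_comm]
  have hψo' : (fun s : ℝ => ψ (s • t)) =o[𝓝[>] (0:ℝ)] (fun s : ℝ => s) :=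
    hψo.trans_isBigO hOb
  -- the comparison function
  set g : ℝ → ℝ := fun s =>
    (C * (s*M)^3 / r + (C'+1) * (s*M)^2 + 2 * ‖b‖ * ‖ψ (s • t)‖) / (2*s) with hg_def
  -- g tends to 0
  have hg : Tendsto g (𝓝[>] (0:ℝ)) (𝓝 0) := by
    have h1 : Tendsto (fun s : ℝ => C*M^3/(2*r)*s^2 + (C'+1)*M^2/2*s
        + ‖b‖ * (‖ψ (s • t)‖ / s)) (𝓝[>] (0:ℝ)) (𝓝 0) := by
      have t1 : Tendsto (fun s : ℝ => C*M^3/(2*r)*s^2) (𝓝[>] (0:ℝ)) (𝓝 0) := by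
        have : Tendsto (fun s : ℝ => C*M^3/(2*r)*s^2) (𝓝 (0:ℝ)) (𝓝 (C*M^3/(2*r)*0^2)) :=
          (continuous_const.mul (continuous_pow 2)).tendsto 0
        simpa using this.mono_left nhdsWithin_le_nhds
      have t2 : Tendsto (fun s : ℝ => (C'+1)*M^2/2*s) (𝓝[>] (0:ℝ)) (𝓝 0) := by
        have : Tendsto (fun s : ℝ => (C'+1)*M^2/2*s) (𝓝 (0:ℝ)) (𝓝 ((C'+1)*M^2/2*0)) :=
          (continuous_const.mul continuous_id).tendsto 0
        simpa using this.mono_left nhdsWithin_le_nhds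
      have t3 : Tendsto (fun s : ℝ => ‖b‖ * (‖ψ (s • t)‖ / s)) (𝓝[>] (0:ℝ)) (𝓝 0) := by
        have := hψo'.norm_left.tendsto_div_nhds_zero
        simpa using (this.const_mul ‖b‖)
      simpa using (t1.add t2).add t3
    refine h1.congr' ?_
    filter_upwards [self_mem_nhdsWithin] with s hs
    have hs0 : (s:ℝ) ≠ 0 := ne_of_gt hs
    rw [hg_def]
    field_simp
  -- the eventual bound
  have hev : ∀ᶠ s in 𝓝[>] (0:ℝ), |⟪b, u⟫| ≤ g s := by
    have hmin : (0:ℝ) < min r₁ (r/2) := lt_min hr₁ (by positivity)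
    have htend : Tendsto (fun s : ℝ => s * M) (𝓝[>] (0:ℝ)) (𝓝 0) := by
      have : Tendsto (fun s : ℝ => s * M) (𝓝 (0:ℝ)) (𝓝 (0 * M)) :=
        (continuous_id.mul continuous_const).tendsto 0
      simpa using this.mono_left nhdsWithin_le_nhds
    have hsmall : ∀ᶠ s in 𝓝[>] (0:ℝ), s * M < min r₁ (r/2) :=
      htend.eventually (gt_mem_nhds hmin)
    have hpsi : ∀ᶠ s in 𝓝[>] (0:ℝ), ‖ψ (s • t)‖ ≤ 1 * ‖s‖ := hψo'.def one_pos
    filter_upwards [hsmall, hpsi, self_mem_nhdsWithin] with s hsm hps hs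
    have hs0 : (0:ℝ) < s := hs
    set w : Eu n := ψ (s • t) with hw
    have hwle : ‖w‖ ≤ s := by
      have := hps
      rw [one_mul, Real.norm_eq_abs, abs_of_pos hs0] at this
      exact this
    set vs : Eu n := s • u + w with hvs
    have hvnorm : ‖vs‖ ≤ s * M := by
      calc ‖vs‖ ≤ ‖s • u‖ + ‖w‖ := norm_add_le _ _
        _ = s * ‖u‖ + ‖w‖ := by rw [norm_smul, Real.norm_eq_abs, abs_of_pos hs0]
        _ ≤ s * ‖u‖ + s := by linarith
        _ = s * M := by rw [hM]; ring
    set x : Eu n := z + vs with hx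
    have hxz : x - z = vs := by rw [hx, add_sub_cancel_left]
    have hxgraph : x ∈ {x | ∃ t : T, x = z + (t : Eu n) + ψ t} := by
      refine ⟨s • t, ?_⟩
      rw [hx, hvs]
      have : ((s • t : T) : Eu n) = s • u := by simp [ht]
      rw [this, hw, add_assoc]
    have hxball1 : x ∈ ball z r₁ := by
      rw [mem_ball, dist_eq_norm, hxz]
      exact lt_of_le_of_lt hvnorm (lt_of_lt_of_le hsm (min_le_left _ _))
    have hxm : x ∈ msupp μ := by
      have : x ∈ msupp μ ∩ ball z r₁ := by
        rw [hgraph]; exact ⟨hxgraph, hxball1⟩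
      exact this.1
    have hxball2 : x ∈ ball z (r/2) := by
      rw [mem_ball, dist_eq_norm, hxz]
      exact lt_of_le_of_lt hvnorm (lt_of_lt_of_le hsm (min_le_right _ _))
    have hE := hineq x ⟨hxm, hxball2⟩
    rw [hxz] at hE
    have hinner : ⟪(2:ℕ) • b, vs⟫ = 2*s*⟪b, u⟫ + 2*⟪b, w⟫ := by
      rw [two_smul, inner_add_left, hvs, inner_add_right, real_inner_smul_right]
      ring
    rw [hinner] at hE
    -- bound the remainder
    have hbw : |⟪b, w⟫| ≤ ‖b‖ * ‖w‖ := abs_real_inner_le_norm b w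
    have hQ1 : 0 ≤ Q vs := hQnn vs
    have hQ2 : Q vs ≤ C' * ‖vs‖^2 := hQbound vs
    have hVnn : (0:ℝ) ≤ ‖vs‖ := norm_nonneg _
    have h1 : |2*⟪b, w⟫ + Q vs - ‖vs‖^2| ≤ 2*‖b‖*‖w‖ + (C'+1)*‖vs‖^2 := by
      rw [abs_le] at hbw ⊢
      have hsq : (0:ℝ) ≤ ‖vs‖^2 := sq_nonneg _
      constructor <;> nlinarith [hsq]
    have key : |2*s*⟪b, u⟫| ≤ C * ‖vs‖^3 / r + (2*‖b‖*‖w‖ + (C'+1)*‖vs‖^2) := by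
      have habs : |(2*s*⟪b, u⟫ + 2*⟪b, w⟫ + Q vs - ‖vs‖^2)
          - (2*⟪b, w⟫ + Q vs - ‖vs‖^2)| ≤ |2*s*⟪b, u⟫ + 2*⟪b, w⟫ + Q vs - ‖vs‖^2|
          + |2*⟪b, w⟫ + Q vs - ‖vs‖^2| := abs_sub _ _
      have heq : (2*s*⟪b, u⟫ + 2*⟪b, w⟫ + Q vs - ‖vs‖^2)
          - (2*⟪b, w⟫ + Q vs - ‖vs‖^2) = 2*s*⟪b, u⟫ := by ring
      rw [heq] at habs
      linarith
    have hnum : C * ‖vs‖^3 / r + (2*‖b‖*‖w‖ + (C'+1)*‖vs‖^2)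
        ≤ C * (s*M)^3 / r + (C'+1)*(s*M)^2 + 2*‖b‖*‖w‖ := by
      calc C * ‖vs‖^3 / r + (2*‖b‖*‖w‖ + (C'+1)*‖vs‖^2)
          ≤ C * (s*M)^3 / r + (2*‖b‖*‖w‖ + (C'+1)*(s*M)^2) := by gcongr
        _ = C * (s*M)^3 / r + (C'+1)*(s*M)^2 + 2*‖b‖*‖w‖ := by ring
    rw [hg_def]
    rw [le_div_iff₀ (by positivity : (0:ℝ) < 2*s)]
    calc |⟪b, u⟫| * (2*s) = |2*s*⟪b, u⟫| := by
          rw [abs_mul, abs_of_pos (show (0:ℝ) < 2*s by positivity)]; ring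
      _ ≤ C * ‖vs‖^3 / r + (2*‖b‖*‖w‖ + (C'+1)*‖vs‖^2) := key
      _ ≤ C * (s*M)^3 / r + (C'+1)*(s*M)^2 + 2*‖b‖*‖w‖ := hnum
  -- conclude
  have hle : |⟪b, u⟫| ≤ 0 := ge_of_tendsto hg hev
  have : ⟪b, u⟫ = 0 := abs_nonpos_iff.mp hle
  rw [real_inner_comm] at this
  exact this
end
end

section
/- Let μ be a Radon measure on ℝ^{n+1} that is locally uniformly distributed: 0 < μ(B(x,r)) = μ(B(y,r)) < ∞ for all x, y ∈ supp μ and 0 < r ≤ 1. Fix p ∈ supp μ and set g(r) = μ(B(p,r)). Suppose there exist z₀ ∈ supp μ, r₀ > 0, and a k-plane P with B(z₀,r₀) ∩ supp μ = B(z₀,r₀) ∩ P. Then the limit c = lim_{r→0} g(r)/(ω_k r^k) exists and c ∈ (0, ∞). -/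
open MeasureTheory Metric Set Filter Module
open scoped RealInnerProductSpace Topology ENNReal

noncomputable section

lemma squeeze_aux {k : ℕ} {ω c : ℝ} (hω : 0 < ω) (hc : 0 < c)
    {A g : ℝ → ℝ}
    (hA : Tendsto (fun r => A r / (ω * r ^ k)) (𝓝[>] (0:ℝ)) (𝓝 c))
    (hlow : ∀ᶠ r in 𝓝[>] (0:ℝ), ∀ θ ∈ Set.Ioo (0:ℝ) 1, A (θ * r) ≤ g r)
    (hup : ∀ᶠ r in 𝓝[>] (0:ℝ), g r ≤ A r)
    (hg0 : ∀ᶠ r in 𝓝[>] (0:ℝ), 0 ≤ g r) :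
    Tendsto (fun r => g r / (ω * r ^ k)) (𝓝[>] (0:ℝ)) (𝓝 c) := by
  rw [Metric.tendsto_nhds]
  intro ε hε
  -- choose θ
  set δ : ℝ := min (1/2) (ε / (2 * c * (k + 1))) with hδdef
  have hδpos : 0 < δ := lt_min (by norm_num) (by positivity)
  have hδhalf : δ ≤ 1/2 := min_le_left _ _
  set θ : ℝ := 1 - δ with hθdef
  have hθ0 : 0 < θ := by simp only [hθdef]; linarith
  have hθ1 : θ < 1 := by simp only [hθdef]; linarith
  have hθk_le : θ ^ k ≤ 1 := pow_le_one₀ hθ0.le hθ1.le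
  have hθk_pos : 0 < θ ^ k := pow_pos hθ0 k
  have hbern : 1 - (k : ℝ) * δ ≤ θ ^ k := by
    have := one_add_mul_le_pow (a := -δ) (by linarith) k
    rw [← sub_eq_add_neg] at this
    rw [hθdef]; linarith
  have hθk_ge : c * (1 - θ ^ k) ≤ ε / 2 := by
    have h1 : 1 - θ ^ k ≤ (k:ℝ) * δ := by linarith
    have h2 : δ ≤ ε / (2 * c * (k + 1)) := min_le_right _ _
    have h3 : (k:ℝ) * δ ≤ (k:ℝ) * (ε / (2 * c * (k + 1))) :=
      mul_le_mul_of_nonneg_left h2 (Nat.cast_nonneg k)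
    have h4 : (k:ℝ) * (ε / (2 * c * (k + 1))) ≤ ε / (2 * c) := by
      rw [show (k:ℝ) * (ε / (2 * c * (k + 1))) = ((k:ℝ) * ε) / (2 * c * (k + 1)) from by ring]
      rw [div_le_div_iff₀ (by positivity) (by positivity)]
      nlinarith [hε.le, hc.le]
    have h5 : 1 - θ ^ k ≤ ε / (2*c) := by linarith
    calc c * (1 - θ ^ k) ≤ c * (ε / (2*c)) :=
          mul_le_mul_of_nonneg_left h5 hc.le
      _ = ε / 2 := by field_simp
  -- θ·r tends to 0 within Ioi 0
  have hmul : Tendsto (fun r : ℝ => θ * r) (𝓝[>] (0:ℝ)) (𝓝[>] (0:ℝ)) := by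
    rw [tendsto_nhdsWithin_iff]
    constructor
    · have h := ((continuous_const.mul continuous_id).tendsto' (0:ℝ) 0 (by simp) :
        Tendsto (fun r : ℝ => θ * r) (𝓝 0) (𝓝 0))
      exact h.mono_left nhdsWithin_le_nhds
    · filter_upwards [self_mem_nhdsWithin] with r hr
      exact mul_pos hθ0 hr
  have hAθ : Tendsto (fun r => A (θ * r) / (ω * (θ * r) ^ k)) (𝓝[>] (0:ℝ)) (𝓝 c) :=
    hA.comp hmul
  have hA' := (Metric.tendsto_nhds.1 hA) (ε/2) (by positivity)
  have hAθ' := (Metric.tendsto_nhds.1 hAθ) (ε/2) (by positivity)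
  filter_upwards [hA', hAθ', hlow, hup, hg0, self_mem_nhdsWithin]
    with r h1 h2 h3 h4 h5 hr
  have hrpos : 0 < r := hr
  have hW : 0 < ω * r ^ k := by positivity
  have hW' : 0 < ω * (θ * r) ^ k := by positivity
  rw [Real.dist_eq] at h1 h2 ⊢
  rw [abs_lt] at h1 h2 ⊢
  constructor
  · -- lower bound
    have hkey : A (θ * r) / (ω * r ^ k) = θ ^ k * (A (θ * r) / (ω * (θ * r) ^ k)) := by
      rw [mul_pow]
      field_simp
    have hlb : θ ^ k * (A (θ * r) / (ω * (θ * r) ^ k)) ≤ g r / (ω * r ^ k) := by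
      rw [← hkey]
      gcongr
      exact h3 θ ⟨hθ0, hθ1⟩
    have hq : c - ε/2 < A (θ * r) / (ω * (θ * r) ^ k) := by linarith
    have : θ ^ k * (c - ε/2) < θ ^ k * (A (θ * r) / (ω * (θ * r) ^ k)) :=
      mul_lt_mul_of_pos_left hq hθk_pos
    have hfin : c - ε ≤ θ ^ k * (c - ε/2) := by nlinarith
    linarith
  · -- upper bound
    have : g r / (ω * r ^ k) ≤ A r / (ω * r ^ k) := by gcongr
    linarith

lemma measure_compl_msupp {X : Type*} [MetricSpace X] [MeasurableSpace X]
    [SecondCountableTopology X]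
    (μ : Measure X) : μ (msupp μ)ᶜ = 0 := by
  obtain ⟨T, hTc, hTS, hTU⟩ := TopologicalSpace.isOpen_sUnion_countable
    {s : Set X | IsOpen s ∧ μ s = 0} (fun s hs => hs.1)
  have hU : (msupp μ)ᶜ ⊆ ⋃₀ {s : Set X | IsOpen s ∧ μ s = 0} := by
    intro x hx
    simp only [msupp, mem_compl_iff, mem_setOf_eq] at hx
    push_neg at hx
    obtain ⟨r, hr, h0⟩ := hx
    refine ⟨ball x r, ⟨isOpen_ball, le_antisymm h0 (zero_le)⟩, mem_ball_self hr⟩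
  have h0 : μ (⋃₀ T) = 0 := (measure_sUnion_null_iff hTc).2 fun s hs => (hTS hs).2
  exact measure_mono_null (hTU ▸ hU) h0

set_option maxHeartbeats 2000000 in
/-- for a locally uniformly distributed measure that is flat (a `k`-plane)
in some ball, the density `c = lim_{r→0} g(r)/(ω_k r^k)` exists and lies in `(0,∞)`. -/
theorem stmt8 (n k : ℕ) (μ : Measure (Eu n)) [IsLocallyFiniteMeasure μ]
    (hμ : LocUnifDist n μ) (p : Eu n) (hp : p ∈ msupp μ)
    (z₀ : Eu n) (hz₀ : z₀ ∈ msupp μ) (r₀ : ℝ) (hr₀ : 0 < r₀)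
    (P : AffineSubspace ℝ (Eu n)) (hPne : (P : Set (Eu n)).Nonempty)
    (hPk : finrank ℝ P.direction = k)
    (hflat : ball z₀ r₀ ∩ msupp μ = ball z₀ r₀ ∩ (P : Set (Eu n))) :
    ∃ c : ℝ, 0 < c ∧
      Tendsto (fun r : ℝ => (μ (ball p r)).toReal / (unitBallVol k * r ^ k))
        (𝓝[>] 0) (𝓝 c) := by
  classical
  have hz₀P : z₀ ∈ (P : Set (Eu n)) :=
    (show z₀ ∈ ball z₀ r₀ ∩ (P : Set (Eu n)) from hflat ▸ ⟨mem_ball_self hr₀, hz₀⟩).2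
  set ρ : ℝ := min r₀ 1 with hρdef
  have hρ0 : 0 < ρ := lt_min hr₀ one_pos
  have hρ1 : ρ ≤ 1 := min_le_right _ _
  have hρr₀ : ρ ≤ r₀ := min_le_left _ _
  -- the isometric parametrization of P
  have : FiniteDimensional ℝ P.direction := inferInstance
  set E : P.direction ≃ₗᵢ[ℝ] EuclideanSpace ℝ (Fin k) :=
    (stdOrthonormalBasis ℝ P.direction).repr.trans
      (LinearIsometryEquiv.piLpCongrLeft 2 ℝ ℝ (finCongr hPk)) with hE
  set f : EuclideanSpace ℝ (Fin k) → Eu n := fun x => z₀ + (E.symm x : Eu n) with hfdef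
  have hfd : ∀ a b, dist (f a) (f b) = dist a b := by
    intro a b
    simp only [hfdef, dist_eq_norm]
    have h1 : z₀ + (E.symm a : Eu n) - (z₀ + (E.symm b : Eu n))
        = ((E.symm a - E.symm b : P.direction) : Eu n) := by
      rw [Submodule.coe_sub]; abel
    rw [h1, ← map_sub]
    rw [show ‖((E.symm (a - b) : P.direction) : Eu n)‖ = ‖E.symm (a - b)‖ from rfl]
    rw [E.symm.norm_map]
  have hf_isom : Isometry f := Isometry.of_dist_eq hfd
  have hf0 : f 0 = z₀ := by simp [hfdef]
  have hrange : range f = (P : Set (Eu n)) := by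
    ext y
    constructor
    · rintro ⟨x, rfl⟩
      have : ((E.symm x : P.direction) : Eu n) +ᵥ z₀ ∈ P :=
        AffineSubspace.vadd_mem_of_mem_direction (E.symm x).2 hz₀P
      simpa [hfdef, add_comm] using this
    · intro hy
      have hv : y - z₀ ∈ P.direction := AffineSubspace.vsub_mem_direction hy hz₀P
      refine ⟨E ⟨y - z₀, hv⟩, ?_⟩
      simp [hfdef]
  have hemb : MeasurableEmbedding f := hf_isom.isClosedEmbedding.measurableEmbedding
  set π : Measure (Eu n) := Measure.map f volume with hπdef
  have hπ_apply : ∀ s : Set (Eu n), π s = volume (f ⁻¹' s) := fun s => hemb.map_apply volume s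
  have hπloc : IsLocallyFiniteMeasure π := by
    constructor
    intro x
    refine ⟨ball x 1, ball_mem_nhds x one_pos, ?_⟩
    rw [hπ_apply]
    exact (hf_isom.antilipschitz.isBounded_preimage isBounded_ball).measure_lt_top
  set ν : Measure (Eu n) := μ + π with hνdef
  have hνloc : IsLocallyFiniteMeasure ν := by
    constructor
    intro x
    obtain ⟨s, hs, hμs⟩ := IsLocallyFiniteMeasure.finiteAtNhds (μ := μ) x
    obtain ⟨t, ht, hπt⟩ := hπloc.finiteAtNhds x
    refine ⟨s ∩ t, inter_mem hs ht, ?_⟩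
    rw [hνdef]
    simp only [Measure.add_apply]
    exact ENNReal.add_lt_top.2 ⟨lt_of_le_of_lt (measure_mono inter_subset_left) hμs,
      lt_of_le_of_lt (measure_mono inter_subset_right) hπt⟩
  set G : ℝ → ℝ≥0∞ := fun r => μ (closedBall p r) with hGdef
  -- closed balls centered on the support all have the same measure
  have key : ∀ y ∈ msupp μ, ∀ r : ℝ, 0 < r → r < 1 → μ (closedBall y r) = G r := by
    intro y hy r hr hr1
    set u : ℕ → ℝ := fun m => r + (1 - r) * (1 / (m + 1)) with hudef
    have hu_mem : ∀ m : ℕ, r < u m ∧ u m ≤ 1 := by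
      intro m
      have h1 : (0:ℝ) < 1 / (m + 1) := by positivity
      have h2 : (1:ℝ) / (m + 1) ≤ 1 := by
        rw [div_le_one (by positivity)]
        simp [Nat.cast_nonneg]
      have h1r : (0:ℝ) < 1 - r := by linarith
      simp only [hudef]
      constructor
      · nlinarith
      · nlinarith
    have hu_tends : Tendsto u atTop (𝓝 r) := by
      have h0 : Tendsto (fun m : ℕ => 1 / ((m:ℝ) + 1)) atTop (𝓝 0) :=
        tendsto_one_div_add_atTop_nhds_zero_nat
      have := (h0.const_mul (1 - r)).const_add r
      simpa [hudef] using this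
    have hiInter : ∀ w : Eu n, ⋂ m, ball w (u m) = closedBall w r := by
      intro w
      ext z
      simp only [mem_iInter, mem_ball, mem_closedBall]
      constructor
      · intro h
        exact ge_of_tendsto hu_tends (Eventually.of_forall fun m => (h m).le)
      · intro h m
        exact lt_of_le_of_lt h (hu_mem m).1
    have hmeas : ∀ w : Eu n, ∀ m : ℕ, NullMeasurableSet (ball w (u m)) μ :=
      fun w m => measurableSet_ball.nullMeasurableSet
    have hanti : ∀ w : Eu n, Antitone fun m => ball w (u m) := by
      intro w m m' hmm'
      apply ball_subset_ball
      simp only [hudef]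
      have hc : (m:ℝ) ≤ (m':ℝ) := Nat.cast_le.2 hmm'
      have hd : (1:ℝ) / (m' + 1) ≤ 1 / (m + 1) := by
        apply one_div_le_one_div_of_le (by positivity)
        linarith
      have h1r : (0:ℝ) ≤ 1 - r := by linarith
      nlinarith
    have hfin : ∀ w ∈ msupp μ, ∃ m, μ (ball w (u m)) ≠ ∞ := by
      intro w hw
      exact ⟨0, (hμ w hw w hw (u 0) (hr.trans (hu_mem 0).1) (hu_mem 0).2).2.2.ne⟩
    have h1 := tendsto_measure_iInter_atTop (μ := μ) (hmeas y) (hanti y) (hfin y hy)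
    have h2 := tendsto_measure_iInter_atTop (μ := μ) (hmeas p) (hanti p) (hfin p hp)
    rw [hiInter] at h1 h2
    have heq : (μ ∘ fun m => ball y (u m)) = (μ ∘ fun m => ball p (u m)) := by
      funext m
      exact (hμ y hy p hp (u m) (hr.trans (hu_mem m).1) (hu_mem m).2).2.1
    rw [heq] at h1
    exact tendsto_nhds_unique h1 h2
  -- volume facts
  set volU : ℝ≥0∞ := volume (ball (0 : EuclideanSpace ℝ (Fin k)) 1) with hvolU
  have hvol_pos : 0 < volU := measure_ball_pos _ _ one_pos
  have hvol_ne_top : volU ≠ ⊤ := measure_ball_lt_top.ne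
  have hω_pos : 0 < unitBallVol k := ENNReal.toReal_pos hvol_pos.ne' hvol_ne_top
  -- π of closed balls centered at points of P
  have hπcb : ∀ (x : EuclideanSpace ℝ (Fin k)) (r : ℝ), 0 ≤ r →
      π (closedBall (f x) r) = ENNReal.ofReal (r ^ k) * volU := by
    intro x r hr
    rw [hπ_apply]
    have hpre : f ⁻¹' closedBall (f x) r = closedBall x r := by
      ext a
      simp only [mem_preimage, mem_closedBall, hfd]
    rw [hpre, Measure.addHaar_closedBall _ _ hr, finrank_euclideanSpace_fin]
  have hνcb : ∀ y ∈ ball z₀ ρ ∩ msupp μ, ∀ r : ℝ, 0 < r → r < 1 →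
      ν (closedBall y r) = G r + ENNReal.ofReal (r ^ k) * volU := by
    intro y hy r hr hr1
    have hyP : y ∈ (P : Set (Eu n)) := by
      have : y ∈ ball z₀ r₀ ∩ (P : Set (Eu n)) :=
        hflat ▸ ⟨ball_subset_ball hρr₀ hy.1, hy.2⟩
      exact this.2
    obtain ⟨x, rfl⟩ : y ∈ range f := hrange ▸ hyP
    rw [hνdef, Measure.add_apply, key _ hy.2 r hr hr1, hπcb x r hr.le]
  -- absolute continuity and Radon–Nikodym
  have hμ_le_ν : μ ≤ ν := by rw [hνdef]; exact Measure.le_add_right le_rfl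
  have hac : μ ≪ ν := Measure.absolutelyContinuous_of_le hμ_le_ν
  have hsfν : SigmaFinite ν := by
    have := hνloc
    infer_instance
  set Dr : Eu n → ℝ≥0∞ := μ.rnDeriv ν with hDrdef
  have hDrmeas : Measurable Dr := Measure.measurable_rnDeriv μ ν
  have hBes : ∀ᵐ y ∂ν, Tendsto (fun r => μ (closedBall y r) / ν (closedBall y r))
      (𝓝[>] (0:ℝ)) (𝓝 (Dr y)) := Besicovitch.ae_tendsto_rnDeriv μ ν
  set Conv : Set (Eu n) := {y | Tendsto (fun r => μ (closedBall y r) / ν (closedBall y r))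
      (𝓝[>] (0:ℝ)) (𝓝 (Dr y))} with hConvdef
  have hνConv : ν Convᶜ = 0 := by
    rw [hConvdef, compl_setOf]
    exact ae_iff.1 hBes
  set T : Set (Eu n) := ball z₀ ρ ∩ msupp μ with hTdef
  have hB := hμ z₀ hz₀ z₀ hz₀ ρ hρ0 hρ1
  have hμT_pos : μ T ≠ 0 := by
    have hsub : ball z₀ ρ ⊆ T ∪ (msupp μ)ᶜ := by
      intro x hx
      by_cases hm : x ∈ msupp μ
      · exact Or.inl ⟨hx, hm⟩
      · exact Or.inr hm
    have h1 : μ (ball z₀ ρ) ≤ μ T + μ (msupp μ)ᶜ :=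
      le_trans (measure_mono hsub) (measure_union_le _ _)
    rw [measure_compl_msupp μ, add_zero] at h1
    exact (lt_of_lt_of_le hB.1 h1).ne'
  have hpreball : f ⁻¹' ball z₀ ρ = ball 0 ρ := by
    ext a
    simp only [mem_preimage, mem_ball]
    rw [← hf0, hfd]
  have hTeq : T = ball z₀ ρ ∩ (P : Set (Eu n)) := by
    rw [hTdef]
    ext x
    simp only [mem_inter_iff]
    constructor
    · rintro ⟨h1, h2⟩
      exact ⟨h1, (show x ∈ ball z₀ r₀ ∩ (P : Set (Eu n)) from
        hflat ▸ ⟨ball_subset_ball hρr₀ h1, h2⟩).2⟩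
    · rintro ⟨h1, h2⟩
      exact ⟨h1, (show x ∈ ball z₀ r₀ ∩ msupp μ from
        hflat.symm ▸ ⟨ball_subset_ball hρr₀ h1, h2⟩).2⟩
  have hπT_pos : π T ≠ 0 := by
    rw [hTeq, hπ_apply, preimage_inter, hpreball]
    have hPuniv : f ⁻¹' (P : Set (Eu n)) = univ :=
      eq_univ_of_forall fun x => hrange ▸ mem_range_self x
    rw [hPuniv, inter_univ]
    exact (measure_ball_pos _ _ hρ0).ne'
  -- the set where the density is 0 is μ-null
  have hμN₂ : μ {y : Eu n | Dr y = 0} = 0 := by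
    have hN₂meas : MeasurableSet {y : Eu n | Dr y = 0} := hDrmeas (measurableSet_singleton 0)
    rw [← Measure.setLIntegral_rnDeriv' hac hN₂meas]
    rw [setLIntegral_congr_fun hN₂meas (show EqOn Dr (fun _ => 0) {y : Eu n | Dr y = 0} from fun y hy => hy)]
    simp
  -- the set where the density is ≥ 1 (within the small ball) is π-null
  set Aset : Set (Eu n) := ball z₀ ρ ∩ {y | 1 ≤ Dr y} with hAsetdef
  have hAmeas : MeasurableSet Aset := measurableSet_ball.inter (hDrmeas measurableSet_Ici)
  have hνB'fin : ν (ball z₀ ρ) < ⊤ := by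
    rw [hνdef, Measure.add_apply]
    refine ENNReal.add_lt_top.2 ⟨hB.2.2, ?_⟩
    rw [hπ_apply, hpreball]
    exact measure_ball_lt_top
  have hνA_fin : ν Aset ≠ ⊤ := (lt_of_le_of_lt (measure_mono inter_subset_left) hνB'fin).ne
  have hμA_eq : μ Aset = ν Aset := by
    refine le_antisymm (hμ_le_ν _) ?_
    calc ν Aset = ∫⁻ _ in Aset, 1 ∂ν := (setLIntegral_one _).symm
      _ ≤ ∫⁻ y in Aset, Dr y ∂ν := setLIntegral_mono' hAmeas fun y hy => hy.2
      _ = μ Aset := Measure.setLIntegral_rnDeriv' hac hAmeas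
  have hπA : π Aset = 0 := by
    have hμAfin : μ Aset ≠ ⊤ := hμA_eq ▸ hνA_fin
    have hsplit : μ Aset + π Aset = μ Aset + 0 := by
      rw [add_zero, ← Measure.add_apply, ← hνdef, ← hμA_eq]
    exact (ENNReal.add_right_inj hμAfin).1 hsplit
  -- choose the two good points
  have hy₁ : ∃ y₁, y₁ ∈ T ∧ y₁ ∈ Conv ∧ Dr y₁ ≠ 0 := by
    have hne : μ (T \ (Convᶜ ∪ {y | Dr y = 0})) ≠ 0 := by
      intro h0
      have h1 : μ T ≤ μ (T \ (Convᶜ ∪ {y | Dr y = 0})) + μ (Convᶜ ∪ {y | Dr y = 0}) :=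
        le_trans (measure_mono (subset_diff_union _ _)) (measure_union_le _ _)
      have h2 : μ Convᶜ = 0 := le_antisymm (hνConv ▸ hμ_le_ν Convᶜ) (zero_le)
      rw [h0, measure_union_null h2 hμN₂, zero_add] at h1
      exact hμT_pos (le_antisymm h1 (zero_le))
    obtain ⟨y₁, hy₁⟩ := nonempty_of_measure_ne_zero hne
    refine ⟨y₁, hy₁.1, ?_, ?_⟩
    · by_contra hcc
      exact hy₁.2 (Or.inl hcc)
    · intro h0
      exact hy₁.2 (Or.inr h0)
  have hy₂ : ∃ y₂, y₂ ∈ T ∧ y₂ ∈ Conv ∧ Dr y₂ < 1 := by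
    have hπ_le_ν : π ≤ ν := by rw [hνdef]; exact Measure.le_add_left le_rfl
    have hne : π (T \ (Convᶜ ∪ Aset)) ≠ 0 := by
      intro h0
      have h1 : π T ≤ π (T \ (Convᶜ ∪ Aset)) + π (Convᶜ ∪ Aset) :=
        le_trans (measure_mono (subset_diff_union _ _)) (measure_union_le _ _)
      have h2 : π Convᶜ = 0 := le_antisymm (hνConv ▸ hπ_le_ν Convᶜ) (zero_le)
      rw [h0, measure_union_null h2 hπA, zero_add] at h1
      exact hπT_pos (le_antisymm h1 (zero_le))
    obtain ⟨y₂, hy₂⟩ := nonempty_of_measure_ne_zero hne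
    refine ⟨y₂, hy₂.1, ?_, ?_⟩
    · by_contra hcc
      exact hy₂.2 (Or.inl hcc)
    · by_contra hge
      exact hy₂.2 (Or.inr ⟨hy₂.1.1, not_lt.1 hge⟩)
  obtain ⟨y₁, hy₁T, hy₁C, hy₁0⟩ := hy₁
  obtain ⟨y₂, hy₂T, hy₂C, hy₂1⟩ := hy₂
  -- the ratio function is the same for all support points
  set Φ : ℝ → ℝ≥0∞ := fun r => G r / (G r + ENNReal.ofReal (r ^ k) * volU) with hΦdef
  have hΦlim : ∀ y ∈ T, y ∈ Conv → Tendsto Φ (𝓝[>] (0:ℝ)) (𝓝 (Dr y)) := by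
    intro y hyT hyC
    refine Tendsto.congr' ?_ (hyC : Tendsto _ _ _)
    filter_upwards [Ioo_mem_nhdsGT_of_mem (α := ℝ) ⟨le_refl 0, one_pos⟩] with r hr
    rw [key y hyT.2 r hr.1 hr.2, hνcb y hyT r hr.1 hr.2]
  have hKeq : Dr y₂ = Dr y₁ :=
    tendsto_nhds_unique (hΦlim y₂ hy₂T hy₂C) (hΦlim y₁ hy₁T hy₁C)
  set K : ℝ≥0∞ := Dr y₂ with hKdef
  have hK0 : K ≠ 0 := hKeq ▸ hy₁0
  have hK1 : K < 1 := hy₂1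
  have hKne_top : K ≠ ⊤ := (hK1.trans ENNReal.one_lt_top).ne
  have hlimΦ : Tendsto Φ (𝓝[>] (0:ℝ)) (𝓝 K) := hΦlim y₂ hy₂T hy₂C
  -- convert to a real limit
  set κ : ℝ := K.toReal with hκdef
  have hκpos : 0 < κ := ENNReal.toReal_pos hK0 hKne_top
  have hκ1 : κ < 1 := by
    have := (ENNReal.toReal_lt_toReal hKne_top ENNReal.one_ne_top).2 hK1
    simpa using this
  have hball1_fin : μ (ball p 1) ≠ ⊤ := (hμ p hp p hp 1 one_pos le_rfl).2.2.ne
  have hGfin : ∀ r : ℝ, 0 < r → r < 1 → G r ≠ ⊤ := by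
    intro r hr hr1
    exact (lt_of_le_of_lt (measure_mono (closedBall_subset_ball hr1))
      (lt_top_iff_ne_top.2 hball1_fin)).ne
  set A : ℝ → ℝ := fun r => (G r).toReal with hAdef
  have h_toReal : Tendsto (fun r => (Φ r).toReal) (𝓝[>] (0:ℝ)) (𝓝 κ) :=
    (ENNReal.tendsto_toReal hKne_top).comp hlimΦ
  have hq : Tendsto (fun r => A r / (A r + unitBallVol k * r ^ k)) (𝓝[>] (0:ℝ)) (𝓝 κ) := by
    refine Tendsto.congr' ?_ h_toReal
    filter_upwards [Ioo_mem_nhdsGT_of_mem (α := ℝ) ⟨le_refl 0, one_pos⟩] with r hr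
    have hVfin : ENNReal.ofReal (r ^ k) * volU ≠ ⊤ :=
      ENNReal.mul_ne_top ENNReal.ofReal_ne_top hvol_ne_top
    rw [hΦdef]
    simp only
    rw [ENNReal.toReal_div, ENNReal.toReal_add (hGfin r hr.1 hr.2) hVfin,
      ENNReal.toReal_mul, ENNReal.toReal_ofReal (pow_nonneg hr.1.le k)]
    rw [show (volume (ball (0 : EuclideanSpace ℝ (Fin k)) 1)).toReal = unitBallVol k from rfl]
    simp only [hAdef]
    ring
  set c : ℝ := κ / (1 - κ) with hcdef
  have hcpos : 0 < c := div_pos hκpos (by linarith)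
  have hdiv : Tendsto (fun r => (A r / (A r + unitBallVol k * r ^ k)) /
      (1 - A r / (A r + unitBallVol k * r ^ k))) (𝓝[>] (0:ℝ)) (𝓝 c) :=
    hq.div (tendsto_const_nhds.sub hq) (by intro h; rw [sub_eq_zero] at h; linarith)
  have hA_tendsto : Tendsto (fun r => A r / (unitBallVol k * r ^ k)) (𝓝[>] (0:ℝ)) (𝓝 c) := by
    refine Tendsto.congr' ?_ hdiv
    filter_upwards [Ioo_mem_nhdsGT_of_mem (α := ℝ) ⟨le_refl 0, one_pos⟩] with r hr
    have hA0 : 0 ≤ A r := ENNReal.toReal_nonneg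
    have hW : 0 < unitBallVol k * r ^ k := mul_pos hω_pos (pow_pos hr.1 k)
    have hAW : 0 < A r + unitBallVol k * r ^ k := by linarith
    have h1 : 1 - A r / (A r + unitBallVol k * r ^ k)
        = (unitBallVol k * r ^ k) / (A r + unitBallVol k * r ^ k) := by
      field_simp
      ring
    rw [h1]
    rw [div_div_div_cancel_right₀]
    exact hAW.ne'
  -- pass from closed balls to open balls via a squeeze
  refine ⟨c, hcpos, squeeze_aux hω_pos hcpos hA_tendsto ?_ ?_ ?_⟩
  · filter_upwards [Ioo_mem_nhdsGT_of_mem (α := ℝ) ⟨le_refl 0, one_pos⟩] with r hr θ hθ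
    have hθr : θ * r < r := by
      nlinarith [hθ.1, hθ.2, hr.1]
    have hsub : closedBall p (θ * r) ⊆ ball p r := closedBall_subset_ball hθr
    have hfin : μ (ball p r) ≠ ⊤ :=
      (lt_of_le_of_lt (measure_mono (ball_subset_ball hr.2.le))
        (lt_top_iff_ne_top.2 hball1_fin)).ne
    exact ENNReal.toReal_mono hfin (measure_mono hsub)
  · filter_upwards [Ioo_mem_nhdsGT_of_mem (α := ℝ) ⟨le_refl 0, one_pos⟩] with r hr
    exact ENNReal.toReal_mono (hGfin r hr.1 hr.2) (measure_mono ball_subset_closedBall)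
  · exact Eventually.of_forall fun r => ENNReal.toReal_nonneg
end
end

section
/- Let μ be a locally uniformly distributed measure on ℝ^{n+1} and suppose there exist z₀ ∈ supp μ, r₀ > 0, and a k-plane P with B(z₀,r₀) ∩ supp μ = B(z₀,r₀) ∩ P. Then there exists c ∈ (0,∞) such that μ(E) = c · H^k(E ∩ supp μ) for every Borel set E ⊆ B(z₀, r₀). -/
open MeasureTheory Metric Set Filter Module
open scoped RealInnerProductSpace Topology ENNReal

open scoped NNReal

noncomputable section

/-- a locally uniformly distributed measure that is flat in a ball equals
a constant multiple of Hausdorff measure restricted to its support inside that ball. -/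
theorem stmt9 (n k : ℕ) (μ : Measure (Eu n)) [IsLocallyFiniteMeasure μ]
    (hμ : LocUnifDist n μ)
    (z₀ : Eu n) (hz₀ : z₀ ∈ msupp μ) (r₀ : ℝ) (hr₀ : 0 < r₀)
    (P : AffineSubspace ℝ (Eu n)) (hPne : (P : Set (Eu n)).Nonempty)
    (hPk : finrank ℝ P.direction = k)
    (hflat : ball z₀ r₀ ∩ msupp μ = ball z₀ r₀ ∩ (P : Set (Eu n))) :
    ∃ c : ℝ, 0 < c ∧ ∀ A : Set (Eu n), A ⊆ ball z₀ r₀ → MeasurableSet A →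
      μ A = ENNReal.ofReal c * μH[(k : ℝ)] (A ∩ msupp μ) := by
  classical
  have hz₀P : z₀ ∈ P := by
    have h : z₀ ∈ ball z₀ r₀ ∩ msupp μ := ⟨mem_ball_self hr₀, hz₀⟩
    rw [hflat] at h
    exact h.2
  set E := EuclideanSpace ℝ (Fin k)
  let B : OrthonormalBasis (Fin k) ℝ P.direction :=
    (stdOrthonormalBasis ℝ P.direction).reindex (finCongr hPk)
  let L : E ≃ₗᵢ[ℝ] P.direction := B.repr.symm
  set f : E → Eu n := fun x => (L x : Eu n) + z₀ with hfdef
  have hf : Isometry f := by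
    apply Isometry.of_dist_eq
    intro x y
    show dist ((L x : Eu n) + z₀) ((L y : Eu n) + z₀) = dist x y
    rw [dist_add_right, dist_eq_norm, ← Submodule.coe_sub, Submodule.norm_coe,
      ← LinearIsometryEquiv.map_sub, L.norm_map, ← dist_eq_norm]
  have hf0 : f 0 = z₀ := by
    show (L 0 : Eu n) + z₀ = z₀
    rw [map_zero]
    simp
  have hfrange : range f = (P : Set (Eu n)) := by
    ext p
    constructor
    · rintro ⟨x, rfl⟩
      exact AffineSubspace.vadd_mem_of_mem_direction (L x).2 hz₀P
    · intro hp
      refine ⟨L.symm ⟨p - z₀, AffineSubspace.vsub_mem_direction hp hz₀P⟩, ?_⟩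
      show (L (L.symm ⟨p - z₀, _⟩) : Eu n) + z₀ = p
      rw [L.apply_symm_apply]
      simp
  have hfemb : MeasurableEmbedding f := hf.isClosedEmbedding.measurableEmbedding
  set ρ : Measure E := Measure.comap f μ with hρdef
  have hρs : ∀ s : Set E, ρ s = μ (f '' s) := fun s => hfemb.comap_apply μ s
  have hρfin : ∀ (x : E) (R : ℝ), ρ (closedBall x R) < ∞ := by
    intro x R
    rw [hρs]
    refine lt_of_le_of_lt (measure_mono (?_ : f '' closedBall x R ⊆ closedBall (f x) R))
      ((isCompact_closedBall (f x) R).measure_lt_top)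
    rintro _ ⟨y, hy, rfl⟩
    simpa [mem_closedBall, hf.dist_eq] using hy
  haveI : IsLocallyFiniteMeasure ρ :=
    ⟨fun x => ⟨closedBall x 1, closedBall_mem_nhds x one_pos, hρfin x 1⟩⟩
  -- μ vanishes off P inside the ball
  have hnull : μ (ball z₀ r₀ \ (P : Set (Eu n))) = 0 := by
    apply measure_null_of_locally_null
    intro x hx
    have hxs : x ∉ msupp μ := by
      intro hmem
      have h : x ∈ ball z₀ r₀ ∩ msupp μ := ⟨hx.1, hmem⟩
      rw [hflat] at h
      exact hx.2 h.2
    simp only [msupp, mem_setOf_eq] at hxs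
    push_neg at hxs
    obtain ⟨r, hr, hr0⟩ := hxs
    exact ⟨ball x r, mem_nhdsWithin_of_mem_nhds (ball_mem_nhds x hr),
      le_antisymm hr0 zero_le⟩
  have hconc : ∀ s : Set (Eu n), s ⊆ ball z₀ r₀ → μ s = μ (s ∩ P) := by
    intro s hs
    refine le_antisymm ?_ (measure_mono inter_subset_left)
    have hsub : s ⊆ (s ∩ P) ∪ (ball z₀ r₀ \ P) := by
      intro x hx
      by_cases hxP : x ∈ (P : Set (Eu n))
      · exact Or.inl ⟨hx, hxP⟩
      · exact Or.inr ⟨hs hx, hxP⟩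
    calc μ s ≤ μ ((s ∩ P) ∪ (ball z₀ r₀ \ P)) := measure_mono hsub
      _ ≤ μ (s ∩ P) + μ (ball z₀ r₀ \ P) := measure_union_le _ _
      _ = μ (s ∩ P) := by rw [hnull, add_zero]
  have himg : ∀ (x : E) (r : ℝ), f '' ball x r = ball (f x) r ∩ P := by
    intro x r
    ext p
    constructor
    · rintro ⟨y, hy, rfl⟩
      exact ⟨by simpa [mem_ball, hf.dist_eq] using hy, hfrange ▸ mem_range_self y⟩
    · rintro ⟨hp, hpP⟩
      rw [← hfrange] at hpP
      obtain ⟨y, rfl⟩ := hpP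
      exact ⟨y, by simpa [mem_ball, hf.dist_eq] using hp, rfl⟩
  have hdistf : ∀ x : E, dist (f x) z₀ = ‖x‖ := by
    intro x
    rw [← hf0, hf.dist_eq, dist_zero_right]
  have hkey : ∀ x : E, ‖x‖ < r₀ → ∀ r : ℝ, 0 < r → r ≤ 1 → r ≤ r₀ - ‖x‖ →
      ρ (ball x r) = μ (ball z₀ r) := by
    intro x hx r hr hr1 hrx
    have hfxP : f x ∈ (P : Set (Eu n)) := hfrange ▸ mem_range_self x
    have hfxball : f x ∈ ball z₀ r₀ := by rw [mem_ball, hdistf]; exact hx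
    have hfxsupp : f x ∈ msupp μ := by
      have h : f x ∈ ball z₀ r₀ ∩ (P : Set (Eu n)) := ⟨hfxball, hfxP⟩
      rw [← hflat] at h
      exact h.2
    have hsub : ball (f x) r ⊆ ball z₀ r₀ := by
      intro y hy
      rw [mem_ball] at hy ⊢
      have := dist_triangle y (f x) z₀
      rw [hdistf] at this
      linarith
    rw [hρs, himg, ← hconc _ hsub]
    exact (hμ (f x) hfxsupp z₀ hz₀ r hr hr1).2.1
  -- closed balls
  have hIcb : ∀ (y : E) (r : ℝ), (⋂ m : ℕ, ball y (r + 1 / (m + 1))) = closedBall y r := by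
    intro y r
    ext p
    simp only [mem_iInter, mem_ball, mem_closedBall]
    constructor
    · intro h
      by_contra hc
      push_neg at hc
      obtain ⟨m, hm⟩ := exists_nat_one_div_lt (sub_pos.2 hc)
      have := h m
      linarith
    · intro h m
      have hpos : 0 < 1 / ((m : ℝ) + 1) := by positivity
      linarith
  have hcbtend : ∀ (y : E) (r : ℝ),
      Tendsto (fun m : ℕ => ρ (ball y (r + 1 / (m + 1)))) atTop (𝓝 (ρ (closedBall y r))) := by
    intro y r
    have h := tendsto_measure_iInter_atTop (μ := ρ)
      (s := fun m : ℕ => ball y (r + 1 / (m + 1)))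
      (fun m => measurableSet_ball.nullMeasurableSet) ?_ ⟨0, ?_⟩
    · rw [hIcb] at h
      exact h
    · intro a b hab
      apply ball_subset_ball
      have h1 : (a : ℝ) ≤ b := Nat.cast_le.2 hab
      have h2 : (1 : ℝ) / (b + 1) ≤ 1 / (a + 1) := by
        apply one_div_le_one_div_of_le <;> linarith
      linarith
    · refine (lt_of_le_of_lt (measure_mono ?_) (hρfin y (r + 1))).ne
      norm_num
      exact ball_subset_closedBall
  have hcb : ∀ x : E, ‖x‖ < r₀ → ∀ r : ℝ, 0 < r → r < min 1 (r₀ - ‖x‖) →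
      ρ (closedBall x r) = ρ (closedBall 0 r) := by
    intro x hx r hr hrm
    have h0 : ‖(0 : E)‖ < r₀ := by simpa using hr₀
    have hev : ∀ᶠ m : ℕ in atTop,
        ρ (ball x (r + 1 / (m + 1))) = ρ (ball (0 : E) (r + 1 / (m + 1))) := by
      obtain ⟨M, hM⟩ := exists_nat_one_div_lt (sub_pos.2 hrm)
      filter_upwards [eventually_ge_atTop M] with m hm
      have h1 : (1 : ℝ) / (m + 1) ≤ 1 / (M + 1) := by
        apply one_div_le_one_div_of_le
        · positivity
        · have : (M : ℝ) ≤ m := Nat.cast_le.2 hm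
          linarith
      have hlt : r + 1 / ((m : ℝ) + 1) < min 1 (r₀ - ‖x‖) := by linarith
      have hle1 : r + 1 / ((m : ℝ) + 1) ≤ 1 := (lt_of_lt_of_le hlt (min_le_left _ _)).le
      have hlex : r + 1 / ((m : ℝ) + 1) ≤ r₀ - ‖x‖ := (lt_of_lt_of_le hlt (min_le_right _ _)).le
      have hr' : 0 < r + 1 / ((m : ℝ) + 1) := by positivity
      have hlex0 : r + 1 / ((m : ℝ) + 1) ≤ r₀ - ‖(0 : E)‖ := by
        rw [norm_zero, sub_zero]
        have := norm_nonneg x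
        linarith
      rw [hkey x hx _ hr' hle1 hlex, hkey 0 h0 _ hr' hle1 hlex0]
    exact tendsto_nhds_unique (hcbtend x r)
      ((hcbtend 0 r).congr' (by filter_upwards [hev] with m h using h.symm))
  -- the Hausdorff measure on E
  set ν : Measure E := μH[(k : ℝ)] with hνdef
  haveI hνHaar : ν.IsAddHaarMeasure := by
    have h := MeasureTheory.isAddHaarMeasure_hausdorffMeasure (E := E)
    rwa [finrank_euclideanSpace_fin] at h
  have hνcbfin : ∀ (x : E) (r : ℝ), ν (closedBall x r) < ∞ := fun x r =>
    (isCompact_closedBall x r).measure_lt_top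
  have hνtrans : ∀ (x : E) (r : ℝ), ν (closedBall x r) = ν (closedBall 0 r) := by
    intro x r
    have hset : closedBall x r = (fun y => -x + y) ⁻¹' closedBall (0 : E) r := by
      ext y
      simp [mem_closedBall, dist_eq_norm, neg_add_eq_sub]
      rw [dist_eq_norm]
    rw [hset, measure_preimage_add]
  -- choose a differentiation point
  have hmin : 0 < min 1 r₀ := lt_min one_pos hr₀
  set mhalf : ℝ := min 1 r₀ / 2 with hmhalfdef
  have hmhalfpos : 0 < mhalf := half_pos hmin
  have hmhalf1 : mhalf ≤ 1 := by
    have := min_le_left 1 r₀; simp only [hmhalfdef]; linarith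
  have hmhalfr₀ : mhalf < r₀ := by
    have := min_le_right 1 r₀; simp only [hmhalfdef]; linarith
  obtain ⟨xs, hxsball, hxs⟩ : ∃ x ∈ ball (0 : E) mhalf,
      Tendsto (fun r => ρ (closedBall x r) / ν (closedBall x r)) (𝓝[>] 0)
        (𝓝 (ρ.rnDeriv ν x)) := by
    by_contra hcon
    push_neg at hcon
    have h1 := Besicovitch.ae_tendsto_rnDeriv ρ ν
    have h2 : ν (ball (0 : E) mhalf) = 0 :=
      measure_mono_null (fun x hx => hcon x hx) (ae_iff.mp h1)
    exact (measure_ball_pos ν 0 hmhalfpos).ne' h2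
  set c : ℝ≥0∞ := ρ.rnDeriv ν xs with hcdef
  have hxsnorm : ‖xs‖ < r₀ := by
    have := mem_ball_zero_iff.1 hxsball
    linarith
  -- ratio tends to c at every point of the ball
  have hratio : ∀ x : E, ‖x‖ < r₀ →
      Tendsto (fun r => ρ (closedBall x r) / ν (closedBall x r)) (𝓝[>] 0) (𝓝 c) := by
    intro x hx
    apply hxs.congr'
    have hε : 0 < min (min 1 (r₀ - ‖x‖)) (min 1 (r₀ - ‖xs‖)) :=
      lt_min (lt_min one_pos (by linarith)) (lt_min one_pos (by linarith))
    filter_upwards [Ioo_mem_nhdsGT_of_mem ⟨le_refl (0 : ℝ), hε⟩] with r hrI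
    obtain ⟨hr0, hrε⟩ := hrI
    rw [hcb x hx r hr0 (lt_of_lt_of_le hrε (min_le_left _ _)),
      hcb xs hxsnorm r hr0 (lt_of_lt_of_le hrε (min_le_right _ _)),
      hνtrans x r, hνtrans xs r]
  -- upper comparison
  have hle : ∀ s : Set E, s ⊆ ball 0 r₀ → ∀ t : ℝ≥0, c < t → ρ s ≤ t * ν s := by
    intro s hs t ht
    haveI : IsLocallyFiniteMeasure ((t : ℝ≥0∞) • ν) :=
      ⟨fun x => ⟨closedBall x 1, closedBall_mem_nhds x one_pos, by
        simp only [Measure.smul_apply, smul_eq_mul]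
        exact ENNReal.mul_lt_top ENNReal.coe_lt_top (hνcbfin x 1)⟩⟩
    have h := (Besicovitch.vitaliFamily ρ).measure_le_of_frequently_le ((t : ℝ≥0∞) • ν)
      Measure.AbsolutelyContinuous.rfl s ?_
    · simpa [Measure.smul_apply, smul_eq_mul] using h
    · intro x hx
      have hx' : ‖x‖ < r₀ := mem_ball_zero_iff.1 (hs hx)
      have hev : ∀ᶠ r in 𝓝[>] (0 : ℝ),
          ρ (closedBall x r) ≤ ((t : ℝ≥0∞) • ν) (closedBall x r) := by
        filter_upwards [(hratio x hx').eventually_lt_const ht, self_mem_nhdsWithin]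
          with r h1 h2
        have hr0 : (0 : ℝ) < r := h2
        have hν0 : ν (closedBall x r) ≠ 0 :=
          ((measure_ball_pos ν x hr0).trans_le (measure_mono ball_subset_closedBall)).ne'
        rw [ENNReal.div_lt_iff (Or.inl hν0) (Or.inl (hνcbfin x r).ne)] at h1
        simpa [Measure.smul_apply, smul_eq_mul] using h1.le
      exact (Besicovitch.tendsto_filterAt ρ x).frequently hev.frequently
  -- lower comparison
  have hge : ∀ s : Set E, s ⊆ ball 0 r₀ → ∀ b : ℝ≥0, (b : ℝ≥0∞) < c →
      (b : ℝ≥0∞) * ν s ≤ ρ s := by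
    intro s hs b hb
    have h := (Besicovitch.vitaliFamily ν).measure_le_of_frequently_le
      (ρ := (b : ℝ≥0∞) • ν) ρ Measure.smul_absolutelyContinuous s ?_
    · simpa [Measure.smul_apply, smul_eq_mul] using h
    · intro x hx
      have hx' : ‖x‖ < r₀ := mem_ball_zero_iff.1 (hs hx)
      have hev : ∀ᶠ r in 𝓝[>] (0 : ℝ),
          ((b : ℝ≥0∞) • ν) (closedBall x r) ≤ ρ (closedBall x r) := by
        filter_upwards [(hratio x hx').eventually_const_lt hb, self_mem_nhdsWithin]
          with r h1 h2
        have hr0 : (0 : ℝ) < r := h2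
        have hν0 : ν (closedBall x r) ≠ 0 :=
          ((measure_ball_pos ν x hr0).trans_le (measure_mono ball_subset_closedBall)).ne'
        have h3 := (ENNReal.le_div_iff_mul_le (Or.inl hν0) (Or.inl (hνcbfin x r).ne)).1 h1.le
        simpa [Measure.smul_apply, smul_eq_mul] using h3
      exact (Besicovitch.tendsto_filterAt ν x).frequently hev.frequently
  -- positivity and finiteness of c
  have hsball : ball (0 : E) mhalf ⊆ ball 0 r₀ := ball_subset_ball hmhalfr₀.le
  have hρball : 0 < ρ (ball 0 mhalf) := by
    rw [hkey 0 (by simpa using hr₀) mhalf hmhalfpos hmhalf1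
      (by simpa using hmhalfr₀.le : mhalf ≤ r₀ - ‖(0 : E)‖)]
    exact (hμ z₀ hz₀ z₀ hz₀ mhalf hmhalfpos hmhalf1).1
  have hρballfin : ρ (ball (0 : E) mhalf) ≠ ∞ :=
    (lt_of_le_of_lt (measure_mono ball_subset_closedBall) (hρfin 0 mhalf)).ne
  have hνball0 : ν (ball (0 : E) mhalf) ≠ 0 := (measure_ball_pos ν 0 hmhalfpos).ne'
  have hνballfin : ν (ball (0 : E) mhalf) ≠ ∞ :=
    (lt_of_le_of_lt (measure_mono ball_subset_closedBall) (hνcbfin 0 mhalf)).ne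
  have hc0 : c ≠ 0 := by
    intro h0
    have hinv : Tendsto (fun m : ℕ => ((m : ℝ≥0∞) + 1)⁻¹ * ν (ball (0 : E) mhalf))
        atTop (𝓝 (0 * ν (ball (0 : E) mhalf))) := by
      refine ENNReal.Tendsto.mul_const ?_ (Or.inr hνballfin)
      refine tendsto_of_tendsto_of_tendsto_of_le_of_le tendsto_const_nhds
        ENNReal.tendsto_inv_nat_nhds_zero (fun m => zero_le) (fun m => ?_)
      gcongr
      exact le_self_add
    rw [zero_mul] at hinv
    have hbd : ∀ m : ℕ, ρ (ball (0 : E) mhalf) ≤ ((m : ℝ≥0∞) + 1)⁻¹ * ν (ball (0 : E) mhalf) := by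
      intro m
      have hne : ((m : ℝ≥0) + 1) ≠ 0 := by positivity
      have ht : c < ((((m : ℝ≥0) + 1)⁻¹ : ℝ≥0) : ℝ≥0∞) := by
        rw [h0]
        exact ENNReal.coe_pos.2 (by positivity)
      have h2 := hle _ hsball _ ht
      rwa [ENNReal.coe_inv hne, ENNReal.coe_add, ENNReal.coe_natCast, ENNReal.coe_one] at h2
    have hfinal : ρ (ball (0 : E) mhalf) ≤ 0 := ge_of_tendsto' hinv hbd
    exact hρball.ne' (le_antisymm hfinal zero_le)
  have hctop : c ≠ ∞ := by
    intro htop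
    obtain ⟨nn, hnn⟩ := ENNReal.exists_nat_gt
      (ENNReal.div_lt_top hρballfin hνball0).ne
    have hb := hge _ hsball (nn : ℝ≥0) (by rw [htop]; exact ENNReal.coe_lt_top)
    rw [ENNReal.coe_natCast] at hb
    have h2 := (ENNReal.le_div_iff_mul_le (Or.inl hνball0) (Or.inl hνballfin)).2 hb
    exact absurd h2 (not_le.2 hnn)
  -- the main identity
  have hmain : ∀ s : Set E, s ⊆ ball 0 r₀ → ρ s = c * ν s := by
    intro s hs
    have hνs_fin : ν s ≠ ∞ :=
      (lt_of_le_of_lt (measure_mono (hs.trans ball_subset_closedBall)) (hνcbfin 0 r₀)).ne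
    have hρs_fin : ρ s ≠ ∞ :=
      (lt_of_le_of_lt (measure_mono (hs.trans ball_subset_closedBall)) (hρfin 0 r₀)).ne
    refine le_antisymm ?_ ?_
    · apply ENNReal.le_of_forall_pos_le_add
      intro ε hε _
      by_cases hν0 : ν s = 0
      · have ht : c < ((c.toNNReal + 1 : ℝ≥0) : ℝ≥0∞) := by
          conv_lhs => rw [← ENNReal.coe_toNNReal hctop]
          exact_mod_cast lt_add_one _
        have := hle s hs _ ht
        simp only [hν0, mul_zero, nonpos_iff_eq_zero] at this
        simp [this]
      · set A : ℝ≥0 := (ν s).toNNReal with hAdef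
        have hA0 : A ≠ 0 := by
          simp only [hAdef, ne_eq, ENNReal.toNNReal_eq_zero_iff]
          tauto
        have hAv : (A : ℝ≥0∞) = ν s := ENNReal.coe_toNNReal hνs_fin
        have ht : c < ((c.toNNReal + ε / A : ℝ≥0) : ℝ≥0∞) := by
          conv_lhs => rw [← ENNReal.coe_toNNReal hctop]
          exact_mod_cast lt_add_of_pos_right _ (div_pos hε (zero_lt_iff.2 hA0))
        calc ρ s ≤ ((c.toNNReal + ε / A : ℝ≥0) : ℝ≥0∞) * ν s := hle s hs _ ht
          _ = (c.toNNReal : ℝ≥0∞) * ν s + ((ε / A : ℝ≥0) : ℝ≥0∞) * ν s := by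
              rw [ENNReal.coe_add, add_mul]
          _ = c * ν s + ((ε / A : ℝ≥0) : ℝ≥0∞) * (A : ℝ≥0∞) := by
              rw [ENNReal.coe_toNNReal hctop, hAv]
          _ = c * ν s + ((ε / A * A : ℝ≥0) : ℝ≥0∞) := by rw [← ENNReal.coe_mul]
          _ = c * ν s + (ε : ℝ≥0∞) := by rw [div_mul_cancel₀ _ hA0]
    · apply ENNReal.le_of_forall_pos_le_add
      intro ε hε _
      by_cases hν0 : ν s = 0
      · simp [hν0]
      · set A : ℝ≥0 := (ν s).toNNReal with hAdef
        have hA0 : A ≠ 0 := by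
          simp only [hAdef, ne_eq, ENNReal.toNNReal_eq_zero_iff]
          tauto
        have hAv : (A : ℝ≥0∞) = ν s := ENNReal.coe_toNNReal hνs_fin
        set b : ℝ≥0 := c.toNNReal - ε / A with hbdef
        have hb : (b : ℝ≥0∞) < c := by
          conv_rhs => rw [← ENNReal.coe_toNNReal hctop]
          exact_mod_cast tsub_lt_self (ENNReal.toNNReal_pos hc0 hctop)
            (div_pos hε (zero_lt_iff.2 hA0))
        have hcle : c ≤ (b : ℝ≥0∞) + ((ε / A : ℝ≥0) : ℝ≥0∞) := by
          conv_lhs => rw [← ENNReal.coe_toNNReal hctop]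
          rw [← ENNReal.coe_add]
          exact_mod_cast le_tsub_add
        calc c * ν s ≤ ((b : ℝ≥0∞) + ((ε / A : ℝ≥0) : ℝ≥0∞)) * ν s :=
              mul_le_mul_left hcle _
          _ = (b : ℝ≥0∞) * ν s + ((ε / A : ℝ≥0) : ℝ≥0∞) * ν s := add_mul _ _ _
          _ = (b : ℝ≥0∞) * ν s + (ε : ℝ≥0∞) := by
              rw [← hAv, ← ENNReal.coe_mul, ← ENNReal.coe_mul, div_mul_cancel₀ _ hA0]
          _ ≤ ρ s + ε := add_le_add_left (hge s hs b hb) _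
  -- conclusion
  refine ⟨c.toReal, ENNReal.toReal_pos hc0 hctop, ?_⟩
  intro A hA hAm
  have hAP : A ∩ msupp μ = A ∩ (P : Set (Eu n)) := by
    have h1 : A ∩ msupp μ = A ∩ (ball z₀ r₀ ∩ msupp μ) := by
      rw [← inter_assoc, inter_eq_self_of_subset_left hA]
    rw [h1, hflat, ← inter_assoc, inter_eq_self_of_subset_left hA]
  set s : Set E := f ⁻¹' A with hsdef
  have hss : s ⊆ ball 0 r₀ := by
    intro x hx
    have hball : f x ∈ ball z₀ r₀ := hA hx
    rw [mem_ball_zero_iff, ← hdistf]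
    exact mem_ball.1 hball
  have himgs : f '' s = A ∩ (P : Set (Eu n)) := by
    rw [hsdef, image_preimage_eq_inter_range, hfrange]
  calc μ A = μ (A ∩ P) := hconc A hA
    _ = ρ s := by rw [hρs, himgs]
    _ = c * ν s := hmain s hss
    _ = ENNReal.ofReal c.toReal * μH[(k : ℝ)] (A ∩ msupp μ) := by
        rw [ENNReal.ofReal_toReal hctop, hAP, ← himgs,
          hf.hausdorffMeasure_image (Or.inl (by positivity : (0 : ℝ) ≤ (k : ℝ)))]
end
end
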